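/- (Soft core inclusion in the zero-temperature limit) Let P be a probabilistic tournament on n agents satisfying the margin assumption with margin δ > 0, and let the path-length parameter satisfy K ≥ n − 1. Then for every agent a, the zero-temperature limits of the soft scores satisfy lim_{τ→0⁺} u_τ(a) ≤ lim_{τ→0⁺} t_τ(a) (both limits exist). -/

import Mathlib

open Filter Topology

/-- The logistic sigmoid. -/
noncomputable def sigmoid (z : ℝ) : ℝ := 1 / (1 + Real.exp (-z))

/-- Soft majority edge matrix `D_τ`. -/
noncomputable def softEdge {n : ℕ} (P : Matrix (Fin n) (Fin n) ℝ) (τ : ℝ) :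
    Matrix (Fin n) (Fin n) ℝ := fun a b => sigmoid ((P a b - 1/2) / τ)

/-- 0/1 adjacency matrix of the hard majority tournament. -/
noncomputable def hardAdj {n : ℕ} (P : Matrix (Fin n) (Fin n) ℝ) : Matrix (Fin n) (Fin n) ℝ :=
  fun a b => if 1/2 < P a b then 1 else 0

/-- Soft reachability matrix `R_τ = Σ_{k=1}^K D_τ^k`. -/
noncomputable def softReach {n : ℕ} (P : Matrix (Fin n) (Fin n) ℝ) (τ : ℝ) (K : ℕ) :
    Matrix (Fin n) (Fin n) ℝ := ∑ k ∈ Finset.Icc 1 K, softEdge P τ ^ k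

/-- softmin over a finite family. -/
noncomputable def softmin {ι : Type*} (τ : ℝ) (s : Finset ι) (f : ι → ℝ) : ℝ :=
  -τ * Real.log (∑ i ∈ s, Real.exp (-(f i) / τ))

/-- scalar soft maximum over a finite family. -/
noncomputable def smax {ι : Type*} (τ : ℝ) (s : Finset ι) (f : ι → ℝ) : ℝ :=
  τ * Real.log (∑ i ∈ s, Real.exp (f i / τ))

/-- Soft Top-Cycle membership score `t_τ(a)`. -/
noncomputable def tcScore {n : ℕ} (P : Matrix (Fin n) (Fin n) ℝ) (τ : ℝ) (K : ℕ) (a : Fin n) : ℝ :=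
  softmin τ ({a}ᶜ : Finset (Fin n)) (fun b => softReach P τ K a b)

/-- Soft cover score `cover_τ(c, a)`. -/
noncomputable def coverScore {n : ℕ} (P : Matrix (Fin n) (Fin n) ℝ) (τ : ℝ) (c a : Fin n) : ℝ :=
  softEdge P τ c a *
    (1 - smax τ (Finset.univ : Finset (Fin n)) (fun b => softEdge P τ a b - softEdge P τ c b))

/-- Soft Uncovered-Set membership score `u_τ(a)`. -/
noncomputable def ucScore {n : ℕ} (P : Matrix (Fin n) (Fin n) ℝ) (τ : ℝ) (a : Fin n) : ℝ :=
  1 - smax τ ({a}ᶜ : Finset (Fin n)) (fun c => coverScore P τ c a)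

/-- `a ≻ b` in the hard majority tournament. -/
def beats {n : ℕ} (P : Matrix (Fin n) (Fin n) ℝ) (a b : Fin n) : Prop := 1/2 < P a b

/-- `a` reaches `b` via a directed path in the hard majority tournament. -/
def reaches {n : ℕ} (P : Matrix (Fin n) (Fin n) ℝ) : Fin n → Fin n → Prop :=
  Relation.TransGen (beats P)

/-- `c` covers `a` in the hard majority tournament. -/
def covers {n : ℕ} (P : Matrix (Fin n) (Fin n) ℝ) (c a : Fin n) : Prop :=
  beats P c a ∧ ∀ b, beats P a b → beats P c b

/-- membership in the Top Cycle of the hard majority tournament. -/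
def inTopCycle {n : ℕ} (P : Matrix (Fin n) (Fin n) ℝ) (a : Fin n) : Prop :=
  ∀ b, b ≠ a → reaches P a b

/-- membership in the Uncovered Set of the hard majority tournament. -/
def inUncovered {n : ℕ} (P : Matrix (Fin n) (Fin n) ℝ) (a : Fin n) : Prop :=
  ∀ c, c ≠ a → ¬ covers P c a

/-- `P` is a probabilistic tournament. -/
def IsProbTournament {n : ℕ} (P : Matrix (Fin n) (Fin n) ℝ) : Prop :=
  (∀ a b, 0 ≤ P a b ∧ P a b ≤ 1) ∧ (∀ a b, P a b + P b a = 1) ∧ ∀ a, P a a = 1/2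

/-- margin assumption with margin `δ`. -/
def HasMargin {n : ℕ} (P : Matrix (Fin n) (Fin n) ℝ) (δ : ℝ) : Prop :=
  ∀ a b, a ≠ b → δ ≤ |P a b - 1/2|


/-! ### Auxiliary lemmas -/

lemma tendsto_sigmoid_pos {z : ℝ} (hz : 0 < z) :
    Tendsto (fun τ : ℝ => 1 / (1 + Real.exp (-(z / τ)))) (𝓝[>] (0:ℝ)) (𝓝 1) := by
  have h1 : Tendsto (fun τ : ℝ => z / τ) (𝓝[>] (0:ℝ)) atTop := by
    simpa [div_eq_mul_inv] using tendsto_inv_nhdsGT_zero.const_mul_atTop hz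
  have h2 : Tendsto (fun τ : ℝ => Real.exp (-(z / τ))) (𝓝[>] (0:ℝ)) (𝓝 0) :=
    Real.tendsto_exp_atBot.comp (tendsto_neg_atBot_iff.mpr h1)
  have h3 : Tendsto (fun τ : ℝ => 1 / (1 + Real.exp (-(z / τ)))) (𝓝[>] (0:ℝ))
      (𝓝 ((1:ℝ) / (1 + 0))) :=
    tendsto_const_nhds.div (tendsto_const_nhds.add h2) (by norm_num)
  simpa using h3

lemma tendsto_sigmoid_neg {z : ℝ} (hz : z < 0) :
    Tendsto (fun τ : ℝ => 1 / (1 + Real.exp (-(z / τ)))) (𝓝[>] (0:ℝ)) (𝓝 0) := by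
  have h1 : Tendsto (fun τ : ℝ => -(z / τ)) (𝓝[>] (0:ℝ)) atTop := by
    have h : Tendsto (fun τ : ℝ => (-z) / τ) (𝓝[>] (0:ℝ)) atTop := by
      simpa [div_eq_mul_inv] using tendsto_inv_nhdsGT_zero.const_mul_atTop (by linarith : 0 < -z)
    simpa [neg_div] using h
  have h2 : Tendsto (fun τ : ℝ => 1 + Real.exp (-(z / τ))) (𝓝[>] (0:ℝ)) atTop :=
    tendsto_atTop_add_const_left _ 1 (Real.tendsto_exp_atTop.comp h1)
  simpa [one_div, Pi.inv_def] using h2.inv_tendsto_atTop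

lemma sum_exp_pos' {ι : Type*} {s : Finset ι} (hs : s.Nonempty) (g : ι → ℝ) :
    0 < ∑ i ∈ s, Real.exp (g i) :=
  Finset.sum_pos (fun i _ => Real.exp_pos _) hs

lemma le_smax {ι : Type*} {τ : ℝ} (hτ : 0 < τ) {s : Finset ι} (hs : s.Nonempty) (f : ι → ℝ) :
    s.sup' hs f ≤ smax τ s f := by
  obtain ⟨i0, hi0, hsup⟩ := Finset.exists_mem_eq_sup' hs f
  have h1 : Real.exp (f i0 / τ) ≤ ∑ i ∈ s, Real.exp (f i / τ) :=
    Finset.single_le_sum (f := fun i => Real.exp (f i / τ)) (fun i _ => (Real.exp_pos _).le) hi0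
  have h2 : f i0 / τ ≤ Real.log (∑ i ∈ s, Real.exp (f i / τ)) := by
    rw [← Real.log_exp (f i0 / τ)]
    exact Real.log_le_log (Real.exp_pos _) h1
  rw [hsup, smax]
  calc f i0 = τ * (f i0 / τ) := by field_simp
  _ ≤ τ * Real.log (∑ i ∈ s, Real.exp (f i / τ)) := mul_le_mul_of_nonneg_left h2 hτ.le

lemma smax_le {ι : Type*} {τ : ℝ} (hτ : 0 < τ) {s : Finset ι} (hs : s.Nonempty) (f : ι → ℝ) :
    smax τ s f ≤ s.sup' hs f + τ * Real.log s.card := by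
  have h1 : ∑ i ∈ s, Real.exp (f i / τ) ≤ (s.card : ℝ) * Real.exp (s.sup' hs f / τ) := by
    calc ∑ i ∈ s, Real.exp (f i / τ) ≤ ∑ _i ∈ s, Real.exp (s.sup' hs f / τ) := by
          apply Finset.sum_le_sum
          intro i hi
          exact Real.exp_le_exp.mpr (by gcongr; exact Finset.le_sup' f hi)
      _ = (s.card : ℝ) * Real.exp (s.sup' hs f / τ) := by
          rw [Finset.sum_const, nsmul_eq_mul]
  have h2 : Real.log (∑ i ∈ s, Real.exp (f i / τ)) ≤
      Real.log ((s.card : ℝ) * Real.exp (s.sup' hs f / τ)) :=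
    Real.log_le_log (sum_exp_pos' hs _) h1
  have hcard : (0:ℝ) < s.card := by exact_mod_cast hs.card_pos
  rw [Real.log_mul (ne_of_gt hcard) (Real.exp_ne_zero _), Real.log_exp] at h2
  calc smax τ s f ≤ τ * (Real.log s.card + s.sup' hs f / τ) :=
        mul_le_mul_of_nonneg_left h2 hτ.le
    _ = s.sup' hs f + τ * Real.log s.card := by field_simp; ring

lemma tendsto_sup' {ι α : Type*} {l : Filter α} {s : Finset ι} (hs : s.Nonempty)
    {g : α → ι → ℝ} {L : ι → ℝ} (h : ∀ i ∈ s, Tendsto (fun x => g x i) l (𝓝 (L i))) :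
    Tendsto (fun x => s.sup' hs (g x)) l (𝓝 (s.sup' hs L)) := by
  induction hs using Finset.Nonempty.cons_induction with
  | singleton i => simpa only [Finset.sup'_singleton] using h i (Finset.mem_singleton_self i)
  | cons i s hi hs ih =>
    simp only [Finset.sup'_cons hs]
    exact (h i (by simp)).max (ih (fun j hj => h j (Finset.mem_cons_of_mem hj)))

lemma tendsto_smax {ι : Type*} {s : Finset ι} (hs : s.Nonempty)
    {g : ℝ → ι → ℝ} {L : ι → ℝ}
    (h : ∀ i ∈ s, Tendsto (fun τ => g τ i) (𝓝[>] (0:ℝ)) (𝓝 (L i))) :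
    Tendsto (fun τ => smax τ s (g τ)) (𝓝[>] (0:ℝ)) (𝓝 (s.sup' hs L)) := by
  have hsup : Tendsto (fun τ => s.sup' hs (g τ)) (𝓝[>] (0:ℝ)) (𝓝 (s.sup' hs L)) :=
    tendsto_sup' hs h
  have hτ0 : Tendsto (fun τ : ℝ => τ) (𝓝[>] (0:ℝ)) (𝓝 0) :=
    tendsto_id.mono_left nhdsWithin_le_nhds
  have hupper : Tendsto (fun τ => s.sup' hs (g τ) + τ * Real.log s.card) (𝓝[>] (0:ℝ))
      (𝓝 (s.sup' hs L)) := by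
    have h5 := hsup.add ((hτ0.mul tendsto_const_nhds :
      Tendsto (fun τ : ℝ => τ * Real.log s.card) (𝓝[>] (0:ℝ)) (𝓝 (0 * Real.log s.card))))
    simpa using h5
  apply tendsto_of_tendsto_of_tendsto_of_le_of_le' hsup hupper
  · filter_upwards [self_mem_nhdsWithin] with τ hτ
    exact le_smax hτ hs (g τ)
  · filter_upwards [self_mem_nhdsWithin] with τ hτ
    exact smax_le hτ hs (g τ)

/-- the hard limit matrix of `softEdge`. -/
noncomputable def Mlim {n : ℕ} (P : Matrix (Fin n) (Fin n) ℝ) : Matrix (Fin n) (Fin n) ℝ :=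
  fun a b => if 1/2 < P a b then 1 else if P a b < 1/2 then 0 else 1/2

lemma Mlim_nonneg {n : ℕ} (P : Matrix (Fin n) (Fin n) ℝ) (a b : Fin n) : 0 ≤ Mlim P a b := by
  unfold Mlim; split_ifs <;> norm_num

lemma Mlim_le_one {n : ℕ} (P : Matrix (Fin n) (Fin n) ℝ) (a b : Fin n) : Mlim P a b ≤ 1 := by
  unfold Mlim; split_ifs <;> norm_num

lemma Mlim_pow_nonneg {n : ℕ} (P : Matrix (Fin n) (Fin n) ℝ) (k : ℕ) (i j : Fin n) :
    0 ≤ (Mlim P ^ k) i j := by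
  induction k generalizing i j with
  | zero => simp [Matrix.one_apply]; split_ifs <;> norm_num
  | succ k ih =>
    rw [pow_succ, Matrix.mul_apply]
    exact Finset.sum_nonneg fun z _ => mul_nonneg (ih i z) (Mlim_nonneg P z j)

lemma reaches_path {n : ℕ} {P : Matrix (Fin n) (Fin n) ℝ} {a b : Fin n} (h : reaches P a b) :
    ∃ k, 1 ≤ k ∧ ∃ v : ℕ → Fin n, v 0 = a ∧ v k = b ∧ ∀ i < k, beats P (v i) (v (i+1)) := by
  induction h with
  | single hab =>
    refine ⟨1, le_refl 1, fun i => if i = 0 then a else ‹_›, by simp, by simp, ?_⟩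
    intro i hi
    interval_cases i
    simpa using hab
  | @tail c d _ hcb ih =>
    obtain ⟨k, hk, v, hv0, hvk, hedge⟩ := ih
    refine ⟨k + 1, by omega, fun i => if i = k + 1 then d else v i, ?_, by simp, ?_⟩
    · simpa [(by omega : (0:ℕ) ≠ k + 1)] using hv0
    · intro i hi
      rcases Nat.lt_or_ge i k with h1 | h1
      · simp only [if_neg (by omega : i ≠ k + 1), if_neg (by omega : i + 1 ≠ k + 1)]
        exact hedge i h1
      · have hik : i = k := by omega
        subst hik
        simp only [if_neg (by omega : i ≠ i + 1), if_pos rfl]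
        rw [hvk]
        exact hcb

lemma path_shorten {n : ℕ} {P : Matrix (Fin n) (Fin n) ℝ} {a b : Fin n} {k : ℕ}
    (hnk : n ≤ k) (v : ℕ → Fin n) (hv0 : v 0 = a) (hvk : v k = b)
    (hedge : ∀ i < k, beats P (v i) (v (i+1))) :
    ∃ j < k, ∃ w : ℕ → Fin n, w 0 = a ∧ w j = b ∧ ∀ i < j, beats P (w i) (w (i+1)) := by
  have hcard : Fintype.card (Fin n) < Fintype.card (Fin (n+1)) := by simp
  obtain ⟨i0, j0, hij0, heq0⟩ := Fintype.exists_ne_map_eq_of_card_lt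
    (fun m : Fin (n+1) => v (m : ℕ)) hcard
  obtain ⟨i, j, hij, hjn, heq⟩ : ∃ i j : ℕ, i < j ∧ j ≤ n ∧ v i = v j := by
    have hne : (i0 : ℕ) ≠ (j0 : ℕ) := fun h => hij0 (Fin.ext h)
    rcases lt_or_gt_of_ne hne with h | h
    · exact ⟨i0, j0, h, Fin.is_le j0, heq0⟩
    · exact ⟨j0, i0, h, Fin.is_le i0, heq0.symm⟩
  set d := j - i with hd
  have hdk : d ≤ k := by omega
  refine ⟨k - d, by omega, fun m => if m < i then v m else v (m + d), ?_, ?_, ?_⟩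
  · by_cases h0 : 0 < i
    · simpa [h0] using hv0
    · have hi0 : i = 0 := by omega
      have hdj : d = j := by omega
      simp only [if_neg (by omega : ¬ (0:ℕ) < i), Nat.zero_add, hdj, ← heq, hi0] at *
      simpa using hv0
  · have hni : ¬ (k - d < i) := by omega
    simp only [if_neg hni]
    rw [Nat.sub_add_cancel hdk]
    exact hvk
  · intro m hm
    by_cases h2 : m < i
    · by_cases h1 : m + 1 < i
      · simp only [if_pos h2, if_pos h1]
        exact hedge m (by omega)
      · have hmi : m + 1 = i := by omega
        simp only [if_pos h2, if_neg (by omega : ¬ m + 1 < i)]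
        have hrw : v (m + 1 + d) = v (m + 1) := by
          have hj : m + 1 + d = j := by omega
          rw [hj, ← heq, hmi]
        rw [hrw]
        exact hedge m (by omega)
    · simp only [if_neg h2, if_neg (by omega : ¬ m + 1 < i)]
      have hmm : m + 1 + d = m + d + 1 := by omega
      rw [hmm]
      exact hedge (m + d) (by omega)

lemma path_bound {n : ℕ} {P : Matrix (Fin n) (Fin n) ℝ} {a b : Fin n} :
    ∀ k, (∃ v : ℕ → Fin n, v 0 = a ∧ v k = b ∧ ∀ i < k, beats P (v i) (v (i+1))) →
    ∃ j ≤ n - 1, ∃ w : ℕ → Fin n, w 0 = a ∧ w j = b ∧ ∀ i < j, beats P (w i) (w (i+1)) := by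
  intro k
  induction k using Nat.strong_induction_on with
  | _ k ih =>
    rintro ⟨v, hv0, hvk, hedge⟩
    by_cases hk : k ≤ n - 1
    · exact ⟨k, hk, v, hv0, hvk, hedge⟩
    · have hnk : n ≤ k := by omega
      obtain ⟨j, hjk, w, hw⟩ := path_shorten hnk v hv0 hvk hedge
      exact ih j hjk ⟨w, hw⟩

lemma pow_entry_one {n : ℕ} {P : Matrix (Fin n) (Fin n) ℝ} :
    ∀ (k : ℕ) (v : ℕ → Fin n), (∀ i < k, beats P (v i) (v (i+1))) →
    1 ≤ (Mlim P ^ k) (v 0) (v k) := by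
  intro k
  induction k with
  | zero => intro v _; simp [Matrix.one_apply]
  | succ k ih =>
    intro v hedge
    have hshift := ih (fun m => v (m + 1)) (fun i hi => by
      simpa [Nat.add_right_comm] using hedge (i + 1) (by omega))
    have h1 : Mlim P (v 0) (v 1) = 1 := by
      have hb : 1/2 < P (v 0) (v 1) := hedge 0 (by omega)
      unfold Mlim
      rw [if_pos hb]
    calc (1:ℝ) = Mlim P (v 0) (v 1) * 1 := by rw [h1, one_mul]
      _ ≤ Mlim P (v 0) (v 1) * (Mlim P ^ k) (v 1) (v (k + 1)) := by
          apply mul_le_mul_of_nonneg_left _ (Mlim_nonneg P _ _)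
          simpa using hshift
      _ ≤ ∑ z, Mlim P (v 0) z * (Mlim P ^ k) z (v (k + 1)) :=
          Finset.single_le_sum
            (f := fun z => Mlim P (v 0) z * (Mlim P ^ k) z (v (k + 1)))
            (fun z _ => mul_nonneg (Mlim_nonneg P _ _) (Mlim_pow_nonneg P k _ _))
            (Finset.mem_univ (v 1))
      _ = (Mlim P ^ (k+1)) (v 0) (v (k+1)) := by rw [pow_succ', Matrix.mul_apply]

lemma tendsto_softEdge {n : ℕ} (P : Matrix (Fin n) (Fin n) ℝ) (a b : Fin n) :
    Tendsto (fun τ => softEdge P τ a b) (𝓝[>] (0:ℝ)) (𝓝 (Mlim P a b)) := by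
  have hfun : (fun τ => softEdge P τ a b)
      = fun τ => 1 / (1 + Real.exp (-((P a b - 1/2) / τ))) := rfl
  rcases lt_trichotomy (P a b) (1/2) with h | h | h
  · have hz : P a b - 1/2 < 0 := by linarith
    have hM : Mlim P a b = 0 := by unfold Mlim; rw [if_neg (by linarith), if_pos h]
    rw [hfun, hM]; exact tendsto_sigmoid_neg hz
  · have hM : Mlim P a b = 1/2 := by unfold Mlim; rw [if_neg (by linarith), if_neg (by linarith)]
    rw [hM]
    have hconst : (fun τ : ℝ => softEdge P τ a b) = fun _ => (1:ℝ)/2 := by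
      funext τ
      norm_num [softEdge, sigmoid, h]
    rw [hconst]; exact tendsto_const_nhds
  · have hz : 0 < P a b - 1/2 := by linarith
    have hM : Mlim P a b = 1 := by unfold Mlim; rw [if_pos h]
    rw [hfun, hM]; exact tendsto_sigmoid_pos hz

lemma tendsto_pow_entry {n : ℕ} (P : Matrix (Fin n) (Fin n) ℝ) (k : ℕ) (i j : Fin n) :
    Tendsto (fun τ => (softEdge P τ ^ k) i j) (𝓝[>] (0:ℝ)) (𝓝 ((Mlim P ^ k) i j)) := by
  induction k generalizing i j with
  | zero => simp only [pow_zero]; exact tendsto_const_nhds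
  | succ k ih =>
    simp only [pow_succ, Matrix.mul_apply]
    exact tendsto_finset_sum _ fun z _ => (ih i z).mul (tendsto_softEdge P z j)

lemma tendsto_softReach_entry {n : ℕ} (P : Matrix (Fin n) (Fin n) ℝ) (K : ℕ) (a b : Fin n) :
    Tendsto (fun τ => softReach P τ K a b) (𝓝[>] (0:ℝ))
      (𝓝 (∑ k ∈ Finset.Icc 1 K, (Mlim P ^ k) a b)) := by
  simp only [softReach, Matrix.sum_apply]
  exact tendsto_finset_sum _ fun k _ => tendsto_pow_entry P k a b

/-- soft core inclusion in the zero-temperature limit: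
`lim_{τ→0⁺} u_τ(a) ≤ lim_{τ→0⁺} t_τ(a)` (both limits exist). -/
theorem soft_core_inclusion {n : ℕ} (hn : 2 ≤ n) (P : Matrix (Fin n) (Fin n) ℝ)
    (δ : ℝ) (hδ : 0 < δ) (hP : IsProbTournament P) (hmargin : HasMargin P δ)
    (K : ℕ) (hK : n - 1 ≤ K) (a : Fin n) :
    ∃ Lu Lt : ℝ,
      Tendsto (fun τ : ℝ => ucScore P τ a) (𝓝[>] (0:ℝ)) (𝓝 Lu) ∧
      Tendsto (fun τ : ℝ => tcScore P τ K a) (𝓝[>] (0:ℝ)) (𝓝 Lt) ∧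
      Lu ≤ Lt := by
  classical
  have hnea : Nonempty (Fin n) := ⟨a⟩
  have hne : ({a}ᶜ : Finset (Fin n)).Nonempty := by
    obtain ⟨b, hb⟩ := Fintype.exists_ne_of_one_lt_card (by simpa using (show 1 < n by omega)) a
    exact ⟨b, by simpa using hb⟩
  have huniv : (Finset.univ : Finset (Fin n)).Nonempty := Finset.univ_nonempty
  -- limit objects
  set Rl : Fin n → Fin n → ℝ := fun x y => ∑ k ∈ Finset.Icc 1 K, (Mlim P ^ k) x y with hRl
  set coverL : Fin n → ℝ := fun c =>
    Mlim P c a * (1 - Finset.univ.sup' huniv (fun b => Mlim P a b - Mlim P c b)) with hcoverL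
  set Lt : ℝ := -(({a}ᶜ : Finset (Fin n)).sup' hne (fun b => -(Rl a b))) with hLt
  set Lu : ℝ := 1 - ({a}ᶜ : Finset (Fin n)).sup' hne coverL with hLu
  -- tendsto for tcScore
  have htc : Tendsto (fun τ : ℝ => tcScore P τ K a) (𝓝[>] (0:ℝ)) (𝓝 Lt) := by
    have heq : ∀ τ : ℝ, tcScore P τ K a
        = -(smax τ ({a}ᶜ : Finset (Fin n)) (fun b => -(softReach P τ K a b))) := by
      intro τ
      simp only [tcScore, softmin, smax, neg_mul, neg_div, neg_neg]
    have hsm : Tendsto (fun τ : ℝ =>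
        smax τ ({a}ᶜ : Finset (Fin n)) (fun b => -(softReach P τ K a b))) (𝓝[>] (0:ℝ))
        (𝓝 (({a}ᶜ : Finset (Fin n)).sup' hne (fun b => -(Rl a b)))) :=
      tendsto_smax hne (fun b _ => (tendsto_softReach_entry P K a b).neg)
    rw [hLt]
    exact Tendsto.congr (fun τ => (heq τ).symm) hsm.neg
  -- tendsto for ucScore
  have hcovt : ∀ c ∈ ({a}ᶜ : Finset (Fin n)), Tendsto (fun τ : ℝ => coverScore P τ c a)
      (𝓝[>] (0:ℝ)) (𝓝 (coverL c)) := by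
    intro c _
    have hin : Tendsto (fun τ : ℝ =>
        smax τ (Finset.univ : Finset (Fin n)) (fun b => softEdge P τ a b - softEdge P τ c b))
        (𝓝[>] (0:ℝ)) (𝓝 (Finset.univ.sup' huniv (fun b => Mlim P a b - Mlim P c b))) :=
      tendsto_smax huniv (fun b _ => (tendsto_softEdge P a b).sub (tendsto_softEdge P c b))
    exact (tendsto_softEdge P c a).mul (tendsto_const_nhds.sub hin)
  have huc : Tendsto (fun τ : ℝ => ucScore P τ a) (𝓝[>] (0:ℝ)) (𝓝 Lu) := by
    rw [hLu]
    exact tendsto_const_nhds.sub (tendsto_smax hne hcovt)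
  refine ⟨Lu, Lt, huc, htc, ?_⟩
  -- basic facts
  have hRl0 : ∀ b, 0 ≤ Rl a b := fun b =>
    Finset.sum_nonneg fun k _ => Mlim_pow_nonneg P k a b
  have hLt0 : 0 ≤ Lt := by
    rw [hLt, neg_nonneg]
    exact Finset.sup'_le _ _ fun b _ => neg_nonpos.mpr (hRl0 b)
  have hcov0 : ∀ c, 0 ≤ coverL c := by
    intro c
    apply mul_nonneg (Mlim_nonneg P c a)
    rw [sub_nonneg]
    exact Finset.sup'_le _ _ fun b _ => by
      have h1 := Mlim_le_one P a b
      have h2 := Mlim_nonneg P c b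
      linarith
  have hLu1 : Lu ≤ 1 := by
    rw [hLu]
    obtain ⟨b0, hb0⟩ := hne
    have := (Finset.le_sup' coverL hb0).trans' (hcov0 b0)
    linarith
  -- main case split
  by_cases hcov : ∃ c, c ≠ a ∧ covers P c a
  · -- a is covered: Lu ≤ 0 ≤ Lt
    obtain ⟨c, hca, hbca, hcb⟩ := hcov
    have hbca' : 1/2 < P c a := hbca
    have hMca : Mlim P c a = 1 := by unfold Mlim; rw [if_pos hbca']
    have hdiff : ∀ b, Mlim P a b - Mlim P c b ≤ 0 := by
      intro b
      by_cases hb : 1/2 < P a b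
      · have hcbb : 1/2 < P c b := hcb b hb
        unfold Mlim
        rw [if_pos hb, if_pos hcbb]
        norm_num
      · by_cases hba : b = a
        · subst hba
          have hpaa : P b b = 1/2 := hP.2.2 b
          have hMaa : Mlim P b b = 1/2 := by
            unfold Mlim; rw [hpaa]; norm_num
          rw [hMaa, hMca]; norm_num
        · have hmab : δ ≤ |P a b - 1/2| := hmargin a b (fun h => hba h.symm)
          have hlt : P a b < 1/2 := by
            rcases abs_cases (P a b - 1/2) with ⟨h1, _⟩ | ⟨h1, _⟩
            · push_neg at hb; nlinarith
            · nlinarith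
          have hMab : Mlim P a b = 0 := by
            unfold Mlim; rw [if_neg hb, if_pos hlt]
          rw [hMab]
          have := Mlim_nonneg P c b
          linarith
    have hsup0 : Finset.univ.sup' huniv (fun b => Mlim P a b - Mlim P c b) ≤ 0 :=
      Finset.sup'_le _ _ fun b _ => hdiff b
    have hcovc : 1 ≤ coverL c := by
      rw [hcoverL]
      simp only [hMca, one_mul]
      linarith
    have hcmem : c ∈ ({a}ᶜ : Finset (Fin n)) := by simpa using hca
    have : 1 ≤ ({a}ᶜ : Finset (Fin n)).sup' hne coverL :=
      hcovc.trans (Finset.le_sup' coverL hcmem)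
    have hLu0 : Lu ≤ 0 := by rw [hLu]; linarith
    linarith
  · -- a is uncovered, hence in the top cycle: 1 ≤ Lt and Lu ≤ 1
    push_neg at hcov
    have htop : ∀ b, b ≠ a → reaches P a b := by
      intro c hca
      by_contra hnr
      apply hcov c hca
      have hbeats : ∀ x y : Fin n, x ≠ y → ¬ (1/2 < P x y) → 1/2 < P y x := by
        intro x y hxy hnb
        have hm := hmargin x y hxy
        have hsum := hP.2.1 x y
        push_neg at hnb
        rcases abs_cases (P x y - 1/2) with ⟨h1, _⟩ | ⟨h1, _⟩
        · nlinarith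
        · nlinarith
      have hnac : ¬ (1/2 < P a c) := fun h => hnr (Relation.TransGen.single h)
      refine ⟨hbeats a c (fun h => hca h.symm) hnac, ?_⟩
      intro b hab
      have hbc : b ≠ c := by
        rintro rfl
        exact hnr (Relation.TransGen.single hab)
      have hnbc : ¬ (1/2 < P b c) := fun h =>
        hnr ((Relation.TransGen.single hab).tail h)
      exact hbeats b c hbc hnbc
    have hRl1 : ∀ b ∈ ({a}ᶜ : Finset (Fin n)), 1 ≤ Rl a b := by
      intro b hb
      have hba : b ≠ a := by simpa using hb
      obtain ⟨k, _, hv⟩ := reaches_path (htop b hba)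
      obtain ⟨j, hjn, w, hw0, hwj, hedge⟩ := path_bound k hv
      have hj1 : 1 ≤ j := by
        rcases Nat.eq_zero_or_pos j with h0 | h0
        · exfalso; apply hba; rw [← hwj, h0, hw0]
        · exact h0
      have hpow : 1 ≤ (Mlim P ^ j) a b := by
        have := pow_entry_one j w hedge
        rwa [hw0, hwj] at this
      have hjK : j ∈ Finset.Icc 1 K := by
        rw [Finset.mem_Icc]
        exact ⟨hj1, hjn.trans hK⟩
      calc (1:ℝ) ≤ (Mlim P ^ j) a b := hpow
        _ ≤ Rl a b := Finset.single_le_sum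
            (f := fun k => (Mlim P ^ k) a b)
            (fun k _ => Mlim_pow_nonneg P k a b) hjK
    have hLt1 : 1 ≤ Lt := by
      rw [hLt, le_neg]
      exact Finset.sup'_le _ _ fun b hb => by
        have := hRl1 b hb
        linarith
    linarith
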